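/- Let (A,C)_ψ be an entwining structure with C projective over k. Suppose there exists e ∈ C with C* ⇀ e = C (i.e. the map ξ ↦ ξ ⇀ e = e₍₁₎⟨e₍₂₎,ξ⟩ is surjective) and ψ(e ⊗ a) = a ⊗ e for all a ∈ A. Then C is a finitely generated k-module and the map φ : C* → C, φ(ξ) = ξ ⇀ e is an isomorphism of right C-comodules satisfying ψ∘(φ⊗A)∘ψ̄ = (A⊗φ) on A⊗C*. -/

import Mathlib

open TensorProduct LinearMap

noncomputable section

variable (k A C : Type*) [CommRing k] [Ring A] [Algebra k A]
  [AddCommGroup C] [Module k C] [Coalgebra k C]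

/-- An entwining structure `(A,C)_ψ` over `k`. -/
structure Entwining where
  psi : C ⊗[k] A →ₗ[k] A ⊗[k] C
  mul_compat :
    psi ∘ₗ lTensor C (LinearMap.mul' k A)
      = rTensor C (LinearMap.mul' k A)
        ∘ₗ (TensorProduct.assoc k A A C).symm.toLinearMap
        ∘ₗ lTensor A psi
        ∘ₗ (TensorProduct.assoc k A C A).toLinearMap
        ∘ₗ rTensor A psi
        ∘ₗ (TensorProduct.assoc k C A A).symm.toLinearMap
  one_compat : ∀ c : C, psi (c ⊗ₜ[k] (1 : A)) = (1 : A) ⊗ₜ[k] c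
  comul_compat :
    lTensor A (Coalgebra.comul (R := k) (A := C)) ∘ₗ psi
      = (TensorProduct.assoc k A C C).toLinearMap
        ∘ₗ rTensor C psi
        ∘ₗ (TensorProduct.assoc k C A C).symm.toLinearMap
        ∘ₗ lTensor C psi
        ∘ₗ (TensorProduct.assoc k C C A).toLinearMap
        ∘ₗ rTensor A (Coalgebra.comul (R := k) (A := C))
  counit_compat : ∀ (c : C) (a : A),
    (TensorProduct.rid k A)
        ((lTensor A (Coalgebra.counit (R := k) (A := C))) (psi (c ⊗ₜ[k] a)))
      = Coalgebra.counit (R := k) c • a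

variable {k A C} in
/-- Evaluation of the first (dual) factor at `c`: `ξ ⊗ a ↦ ξ(c) • a`. -/
def evFst (c : C) : Module.Dual k C ⊗[k] A →ₗ[k] A :=
  TensorProduct.lift ((LinearMap.lsmul k A) ∘ₗ
    (LinearMap.applyₗ (R := k) c : (C →ₗ[k] k) →ₗ[k] k))

variable {k A C} in
/-- Evaluation of the second (coalgebra) factor against `ξ`: `a ⊗ c ↦ ξ(c) • a`. -/
def evSnd (ξ : Module.Dual k C) : A ⊗[k] C →ₗ[k] A :=
  (TensorProduct.rid k A).toLinearMap ∘ₗ lTensor A ξ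

variable {k A C} in
/-- `ψ̄ : A ⊗ C* → C* ⊗ A` is a factorisation map for the entwining `ψ`:
`⟨c^α, ξ⟩ a_α = ξ_i(c) a^i`. -/
def IsFactorisation (E : Entwining k A C)
    (ψbar : A ⊗[k] Module.Dual k C →ₗ[k] Module.Dual k C ⊗[k] A) : Prop :=
  ∀ (a : A) (ξ : Module.Dual k C) (c : C),
    evFst c (ψbar (a ⊗ₜ[k] ξ)) = evSnd ξ (E.psi (c ⊗ₜ[k] a))

/-- The product of `B = C^{*op}`, i.e. the opposite convolution product:
`⟨c, b b'⟩ = ⟨c₍₂₎, b⟩ ⟨c₍₁₎, b'⟩`, as a linear map `B ⊗ B →ₗ B`. -/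
def opConv : Module.Dual k C ⊗[k] Module.Dual k C →ₗ[k] Module.Dual k C :=
  ((LinearMap.llcomp k C (C ⊗[k] C) k).flip (Coalgebra.comul (R := k) (A := C)))
  ∘ₗ (LinearMap.llcomp k (C ⊗[k] C) (k ⊗[k] k) k (LinearMap.mul' k k))
  ∘ₗ TensorProduct.homTensorHomMap (RingHom.id k) C C k k
  ∘ₗ (TensorProduct.comm k (Module.Dual k C) (Module.Dual k C)).toLinearMap

variable {k A C} in
/-- The multiplication of the smash product `B #_ψ̄ A` on `B ⊗ A`, `B = C^{*op}`:
`(b ⊗ a)(b' ⊗ a') = b ψ̄(a ⊗ b') a'`. -/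
def smashMul (ψbar : A ⊗[k] Module.Dual k C →ₗ[k] Module.Dual k C ⊗[k] A) :
    (Module.Dual k C ⊗[k] A) ⊗[k] (Module.Dual k C ⊗[k] A) →ₗ[k]
      Module.Dual k C ⊗[k] A :=
  rTensor A (opConv k C)
  ∘ₗ (TensorProduct.assoc k (Module.Dual k C) (Module.Dual k C) A).symm.toLinearMap
  ∘ₗ lTensor (Module.Dual k C) (lTensor (Module.Dual k C) (LinearMap.mul' k A))
  ∘ₗ lTensor (Module.Dual k C) (TensorProduct.assoc k (Module.Dual k C) A A).toLinearMap
  ∘ₗ lTensor (Module.Dual k C) (rTensor A ψbar)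
  ∘ₗ lTensor (Module.Dual k C) (TensorProduct.assoc k A (Module.Dual k C) A).symm.toLinearMap
  ∘ₗ (TensorProduct.assoc k (Module.Dual k C) A (Module.Dual k C ⊗[k] A)).toLinearMap

/-- The unit `ε ⊗ 1_A` of the smash product. -/
def smashOne : Module.Dual k C ⊗[k] A :=
  (Coalgebra.counit (R := k) (A := C)) ⊗ₜ[k] (1 : A)

variable {k C} in
/-- `φ_e : C* → C`, `ξ ↦ ξ ⇀ e = e₍₁₎ ⟨e₍₂₎, ξ⟩`. -/
def phiMap (e : C) : Module.Dual k C →ₗ[k] C :=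
  (((LinearMap.llcomp k (C ⊗[k] C) (C ⊗[k] k) C
      (TensorProduct.rid k C).toLinearMap)
    ∘ₗ (LinearMap.lTensorHom C)).flip) (Coalgebra.comul (R := k) e)

variable {k C} in
/-- `ξ ↦ e ↼ ξ = ⟨e₍₁₎, ξ⟩ e₍₂₎`. -/
def rarrowMap (e : C) : Module.Dual k C →ₗ[k] C :=
  (((LinearMap.llcomp k (C ⊗[k] C) (k ⊗[k] C) C
      (TensorProduct.lid k C).toLinearMap)
    ∘ₗ (LinearMap.rTensorHom C)).flip) (Coalgebra.comul (R := k) e)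

variable {k C} in
/-- The (standard) convolution product on `C*`: `(ξ ξ')(c) = ξ(c₍₁₎) ξ'(c₍₂₎)`. -/
def conv (ξ ξ' : Module.Dual k C) : Module.Dual k C :=
  (LinearMap.mul' k k) ∘ₗ TensorProduct.map ξ ξ' ∘ₗ Coalgebra.comul (R := k)

variable {k C} in
/-- `coactD` is the right `C`-coaction on `C*` determined by
`ξ₍₀₎ ⟨ξ₍₁₎, ξ'⟩ = ξ' ξ`. -/
def IsDualCoaction (coactD : Module.Dual k C →ₗ[k] Module.Dual k C ⊗[k] C) :
    Prop :=
  ∀ ξ ξ' : Module.Dual k C,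
    (TensorProduct.rid k (Module.Dual k C))
        ((lTensor (Module.Dual k C) ξ') (coactD ξ))
      = conv ξ' ξ

namespace FrobAux

variable {k A C : Type*} [CommRing k] [Ring A] [Algebra k A]
  [AddCommGroup C] [Module k C] [Coalgebra k C]
variable {M N P : Type*} [AddCommGroup M] [Module k M]
  [AddCommGroup N] [Module k N] [AddCommGroup P] [Module k P]

/-- `m ⊗ p ↦ ξ p • m`. -/
def ev (ξ : P →ₗ[k] k) : M ⊗[k] P →ₗ[k] M :=
  (TensorProduct.rid k M).toLinearMap ∘ₗ lTensor M ξ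

@[simp] lemma ev_tmul (ξ : P →ₗ[k] k) (m : M) (p : P) :
    ev ξ (m ⊗ₜ[k] p) = ξ p • m := by
  simp [ev]

lemma ev_rTensor_apply (ξ : P →ₗ[k] k) (g : M →ₗ[k] N) (x : M ⊗[k] P) :
    ev ξ (rTensor P g x) = g (ev ξ x) := by
  have h : ev ξ ∘ₗ rTensor P g = g ∘ₗ ev (M := M) ξ :=
    TensorProduct.ext' fun m p => by simp [map_smul]
  exact LinearMap.congr_fun h x

lemma ev_lTensor_apply (ξ : P →ₗ[k] k) (g : N →ₗ[k] P) (x : M ⊗[k] N) :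
    ev ξ (lTensor M g x) = ev (ξ ∘ₗ g) x := by
  have h : ev ξ ∘ₗ lTensor M g = ev (M := M) (ξ ∘ₗ g) :=
    TensorProduct.ext' fun m n => by simp
  exact LinearMap.congr_fun h x

lemma ev_assoc_apply (ξ : P →ₗ[k] k) (x : (M ⊗[k] N) ⊗[k] P) :
    lTensor M (ev ξ) (TensorProduct.assoc k M N P x) = ev ξ x := by
  have h : lTensor M (ev ξ) ∘ₗ (TensorProduct.assoc k M N P).toLinearMap
      = ev (M := M ⊗[k] N) ξ :=
    TensorProduct.ext_threefold fun m n p => by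
      simp [TensorProduct.tmul_smul, TensorProduct.smul_tmul']
  exact LinearMap.congr_fun h x

lemma ev_assoc_symm_apply (ξ : P →ₗ[k] k) (x : M ⊗[k] (N ⊗[k] P)) :
    ev ξ ((TensorProduct.assoc k M N P).symm x) = lTensor M (ev ξ) x := by
  have := ev_assoc_apply ξ ((TensorProduct.assoc k M N P).symm x)
  rw [LinearEquiv.apply_symm_apply] at this
  exact this.symm

lemma phiMap_apply (e : C) (ξ : Module.Dual k C) :
    phiMap (k := k) e ξ = ev ξ (Coalgebra.comul (R := k) e) := rfl

lemma evSnd_eq_ev (ξ : Module.Dual k C) : evSnd (A := A) ξ = ev ξ := rfl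

@[simp] lemma evFst_tmul (c : C) (ζ : Module.Dual k C) (a : A) :
    evFst c (ζ ⊗ₜ[k] a) = ζ c • a := by
  simp [evFst]

lemma conv_eq (ξ' ξ : Module.Dual k C) :
    conv ξ' ξ = ξ' ∘ₗ (ev ξ ∘ₗ Coalgebra.comul (R := k)) := by
  have h : (LinearMap.mul' k k) ∘ₗ TensorProduct.map ξ' ξ = ξ' ∘ₗ ev (M := C) ξ :=
    TensorProduct.ext' fun x y => by
      simp [smul_eq_mul, mul_comm]
  show (LinearMap.mul' k k) ∘ₗ TensorProduct.map ξ' ξ ∘ₗ Coalgebra.comul (R := k) = _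
  rw [← LinearMap.comp_assoc, h, LinearMap.comp_assoc]

lemma ev_sep [Module.Finite k C] [Module.Projective k C] {t t' : M ⊗[k] C}
    (h : ∀ ξ : Module.Dual k C, ev ξ t = ev ξ t') : t = t' := by
  obtain ⟨n, f, g, -, -, hfg⟩ := Module.Finite.exists_comp_eq_id_of_projective k C
  have hC : ∀ c : C, c = ∑ i : Fin n, g c i • f (Pi.single i (1 : k)) := by
    intro c
    have h1 : g c = ∑ i : Fin n, g c i • (Pi.single i (1 : k) : Fin n → k) := by
      ext j
      simp [Pi.single_apply, Finset.sum_ite_eq]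
    have h2 := LinearMap.congr_fun hfg c
    simp only [coe_comp, Function.comp_apply, LinearMap.id_coe, id_eq] at h2
    conv_lhs => rw [← h2, h1, map_sum]
    exact Finset.sum_congr rfl fun i _ => by rw [map_smul]
  have key : ∀ u : M ⊗[k] C,
      u = ∑ i : Fin n, (ev ((LinearMap.proj i) ∘ₗ g) u) ⊗ₜ[k] f (Pi.single i (1 : k)) := by
    intro u
    induction u using TensorProduct.induction_on with
    | zero => simp
    | tmul m c =>
        simp only [ev_tmul, coe_comp, Function.comp_apply, LinearMap.proj_apply]
        conv_lhs => rw [hC c]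
        rw [TensorProduct.tmul_sum]
        exact Finset.sum_congr rfl fun i _ => by
          rw [TensorProduct.tmul_smul, TensorProduct.smul_tmul']
    | add x y hx hy =>
        simp only [map_add]
        rw [Finset.sum_congr rfl (fun (i : Fin n) _ => TensorProduct.add_tmul
          (ev ((LinearMap.proj i) ∘ₗ g) x) (ev ((LinearMap.proj i) ∘ₗ g) y)
          (f (Pi.single i (1 : k)))), Finset.sum_add_distrib, ← hx, ← hy]
  rw [key t, key t']
  exact Finset.sum_congr rfl fun i _ => by rw [h]

end FrobAux

/-- if `C` is projective over `k`, `e ∈ C` satisfies `C* ⇀ e = C`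
and `ψ(e ⊗ a) = a ⊗ e` for all `a`, then `C` is finitely generated and
`φ : ξ ↦ ξ ⇀ e` is a right `C`-comodule isomorphism `C* → C` with
`ψ ∘ (φ ⊗ A) ∘ ψ̄ = A ⊗ φ`. -/
theorem frobenius_element_gives_comodule_iso
    [Module.Projective k C] (E : Entwining k A C) (e : C)
    (hsurj : Function.Surjective (phiMap (k := k) e))
    (hcent : ∀ a : A, E.psi (e ⊗ₜ[k] a) = a ⊗ₜ[k] e) :
    Module.Finite k C ∧
    Function.Bijective (phiMap (k := k) e) ∧
    -- `φ` is a right `C`-comodule map: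
    (∀ coactD : Module.Dual k C →ₗ[k] Module.Dual k C ⊗[k] C,
      IsDualCoaction coactD →
        (Coalgebra.comul (R := k) (A := C)) ∘ₗ phiMap (k := k) e
          = rTensor C (phiMap (k := k) e) ∘ₗ coactD) ∧
    -- the compatibility `ψ ∘ (φ ⊗ A) ∘ ψ̄ = A ⊗ φ`:
    (∀ ψbar : A ⊗[k] Module.Dual k C →ₗ[k] Module.Dual k C ⊗[k] A,
      IsFactorisation E ψbar →
        E.psi ∘ₗ rTensor A (phiMap (k := k) e) ∘ₗ ψbar
          = lTensor A (phiMap (k := k) e)) := by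
  classical
  obtain ⟨s, hs⟩ := TensorProduct.exists_finset (Coalgebra.comul (R := k) e)
  have hrep : ∀ ξ : Module.Dual k C, phiMap (k := k) e ξ = ∑ p ∈ s, ξ p.2 • p.1 := by
    intro ξ
    rw [FrobAux.phiMap_apply, hs, map_sum]
    exact Finset.sum_congr rfl fun p _ => by rw [FrobAux.ev_tmul]
  have hfin : Module.Finite k C := by
    refine ⟨⟨s.image Prod.fst, ?_⟩⟩
    rw [eq_top_iff]
    rintro c -
    obtain ⟨ξ, rfl⟩ := hsurj c
    rw [hrep]
    exact Submodule.sum_mem _ fun p hp => Submodule.smul_mem _ _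
      (Submodule.subset_span (Finset.mem_coe.2 (Finset.mem_image_of_mem Prod.fst hp)))
  haveI := hfin
  have hinj : Function.Injective (phiMap (k := k) e) := by
    have hdual : Function.Injective (phiMap (k := k) e).dualMap :=
      LinearMap.dualMap_injective_of_surjective hsurj
    have hi : Function.Injective
        ((Module.evalEquiv k C).symm.toLinearMap ∘ₗ (phiMap (k := k) e).dualMap) := by
      rw [LinearMap.coe_comp]
      exact ((Module.evalEquiv k C).symm.injective).comp hdual
    exact OrzechProperty.injective_of_surjective_of_injective _ _ hi hsurj
  refine ⟨hfin, ⟨hinj, hsurj⟩, ?_, ?_⟩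
  · -- comodule map property
    intro coactD hco
    apply LinearMap.ext
    intro ξ
    simp only [coe_comp, Function.comp_apply]
    apply FrobAux.ev_sep
    intro ξ'
    have hR : FrobAux.ev ξ' ((rTensor C (phiMap (k := k) e)) (coactD ξ))
        = phiMap (k := k) e (FrobAux.ev ξ' (coactD ξ)) :=
      FrobAux.ev_rTensor_apply ξ' (phiMap (k := k) e) (coactD ξ)
    have hco' : FrobAux.ev ξ' (coactD ξ) = conv ξ' ξ := by
      have := hco ξ ξ'
      simpa [FrobAux.ev] using this
    rw [hR, hco']
    rw [FrobAux.phiMap_apply e ξ]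
    rw [← FrobAux.ev_rTensor_apply ξ (Coalgebra.comul (R := k) (A := C))
      (Coalgebra.comul (R := k) e)]
    rw [← Coalgebra.coassoc_symm_apply (R := k) e]
    rw [FrobAux.ev_assoc_symm_apply]
    rw [← LinearMap.lTensor_comp_apply]
    rw [FrobAux.ev_lTensor_apply]
    rw [FrobAux.phiMap_apply e (conv ξ' ξ), FrobAux.conv_eq]
  · -- compatibility with psi
    intro ψbar hfac
    apply TensorProduct.ext'
    intro a ξ
    simp only [coe_comp, Function.comp_apply, lTensor_tmul]
    -- step 1 : rewrite rTensor A φ applied to ψbar (a ⊗ ξ)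
    have hmap : (rTensor A (phiMap (k := k) e)
          : Module.Dual k C ⊗[k] A →ₗ[k] C ⊗[k] A)
        = ∑ p ∈ s, (TensorProduct.mk k C A p.1) ∘ₗ evFst p.2 := by
      apply TensorProduct.ext'
      intro ζ a'
      simp only [rTensor_tmul, LinearMap.sum_apply, coe_comp, Function.comp_apply,
        FrobAux.evFst_tmul, TensorProduct.mk_apply, hrep ζ, TensorProduct.sum_tmul]
      exact Finset.sum_congr rfl fun p _ => by
        rw [TensorProduct.smul_tmul]
    have h1 : rTensor A (phiMap (k := k) e) (ψbar (a ⊗ₜ[k] ξ))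
        = ∑ p ∈ s, p.1 ⊗ₜ[k] FrobAux.ev ξ (E.psi (p.2 ⊗ₜ[k] a)) := by
      rw [hmap]
      simp only [LinearMap.sum_apply, coe_comp, Function.comp_apply,
        TensorProduct.mk_apply]
      exact Finset.sum_congr rfl fun p _ => by
        rw [hfac a ξ p.2, FrobAux.evSnd_eq_ev]
    -- step 2 : use comul_compat at e ⊗ a
    have hE := LinearMap.congr_fun E.comul_compat (e ⊗ₜ[k] a)
    simp only [coe_comp, LinearEquiv.coe_coe, Function.comp_apply, rTensor_tmul,
      hcent a, lTensor_tmul] at hE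
    have h2 : a ⊗ₜ[k] phiMap (k := k) e ξ
        = E.psi (∑ p ∈ s, p.1 ⊗ₜ[k] FrobAux.ev ξ (E.psi (p.2 ⊗ₜ[k] a))) := by
      have hE2 := congrArg (lTensor A (FrobAux.ev ξ)) hE
      rw [lTensor_tmul, ← FrobAux.phiMap_apply] at hE2
      rw [FrobAux.ev_assoc_apply, FrobAux.ev_rTensor_apply,
        FrobAux.ev_assoc_symm_apply, ← LinearMap.lTensor_comp_apply] at hE2
      rw [hE2]
      congr 1
      rw [hs]
      simp only [TensorProduct.sum_tmul, map_sum, LinearMap.lTensor_comp_apply]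
      exact Finset.sum_congr rfl fun p _ => by
        simp only [TensorProduct.assoc_tmul, lTensor_tmul]
    rw [h1, h2]
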